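/- Let Q be a quadratic stochastic operator. The following are equivalent: (1) there exists f ∈ 𝒟 such that lim_{n→∞} sup_{g∈𝒟} ‖ℚⁿ(g) − f‖₁ = 0; (2) there exists f ∈ 𝒟 such that lim_{n→∞} sup_{g,h∈𝒟} ‖P_h^{[0,n]}(g) − f‖₁ = 0; (3) there exists f ∈ 𝒟 such that for every m ≥ 0, lim_{n→∞} sup_{g,h∈𝒟} ‖P_h^{[m,n]}(g) − f‖₁ = 0. -/

import Mathlib

open MeasureTheory Filter Topology

noncomputable section

/-- The set of densities in `L¹(μ)`. -/
def Density {X : Type*} [MeasurableSpace X] (μ : Measure X) : Set (Lp ℝ 1 μ) :=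
  {f | 0 ≤ f ∧ ‖f‖ = 1}

/-- `Q : L¹ × L¹ → L¹` is a quadratic stochastic operator: bilinear, positivity preserving,
symmetric and `‖Q(f,g)‖₁ = ‖f‖₁ ‖g‖₁` for `f, g ≥ 0`. -/
structure IsQSO {X : Type*} [MeasurableSpace X] (μ : Measure X)
    (Q : Lp ℝ 1 μ → Lp ℝ 1 μ → Lp ℝ 1 μ) : Prop where
  add_left : ∀ f f' g, Q (f + f') g = Q f g + Q f' g
  smul_left : ∀ (c : ℝ) f g, Q (c • f) g = c • Q f g
  add_right : ∀ f g g', Q f (g + g') = Q f g + Q f g'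
  smul_right : ∀ (c : ℝ) f g, Q f (c • g) = c • Q f g
  nonneg : ∀ f g, 0 ≤ f → 0 ≤ g → 0 ≤ Q f g
  symm : ∀ f g, Q f g = Q g f
  norm_mul : ∀ f g, 0 ≤ f → 0 ≤ g → ‖Q f g‖ = ‖f‖ * ‖g‖

/-- The quadratic map `ℚ(f) = Q(f,f)`. -/
def QQ {X : Type*} [MeasurableSpace X] {μ : Measure X}
    (Q : Lp ℝ 1 μ → Lp ℝ 1 μ → Lp ℝ 1 μ) (f : Lp ℝ 1 μ) : Lp ℝ 1 μ := Q f f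

/-- The iterates `ℚⁿ`. -/
def Qiter {X : Type*} [MeasurableSpace X] {μ : Measure X}
    (Q : Lp ℝ 1 μ → Lp ℝ 1 μ → Lp ℝ 1 μ) (n : ℕ) : Lp ℝ 1 μ → Lp ℝ 1 μ := (QQ Q)^[n]

/-- `Pchain Q f n = P_f^{[0,n]}`, the nonhomogeneous Markov chain associated with `Q`
and the density `f`, i.e. `P_f^{[0,0]} = id` and
`P_f^{[0,n+1]}(g) = Q(ℚⁿ(f), P_f^{[0,n]}(g))`. -/
def Pchain {X : Type*} [MeasurableSpace X] {μ : Measure X}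
    (Q : Lp ℝ 1 μ → Lp ℝ 1 μ → Lp ℝ 1 μ) (f : Lp ℝ 1 μ) :
    ℕ → Lp ℝ 1 μ → Lp ℝ 1 μ
  | 0 => id
  | n + 1 => fun g => Q (Qiter Q n f) (Pchain Q f n g)

/-- The metric `d_u(Q₁,Q₂) = sup_{f ∈ 𝒟} ‖ℚ₁(f) - ℚ₂(f)‖₁`. -/
def du {X : Type*} [MeasurableSpace X] (μ : Measure X)
    (Q₁ Q₂ : Lp ℝ 1 μ → Lp ℝ 1 μ → Lp ℝ 1 μ) : ℝ :=
  ⨆ f : Density μ, ‖Q₁ f f - Q₂ f f‖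

/-- The metric `d̂_u(Q₁,Q₂) = sup_{f,g ∈ 𝒟} ‖Q₁(f,g) - Q₂(f,g)‖₁`. -/
def dhat {X : Type*} [MeasurableSpace X] (μ : Measure X)
    (Q₁ Q₂ : Lp ℝ 1 μ → Lp ℝ 1 μ → Lp ℝ 1 μ) : ℝ :=
  ⨆ f : Density μ, ⨆ g : Density μ, ‖Q₁ f g - Q₂ f g‖

/-- `supDiff μ Q n = sup_{f,g,h ∈ 𝒟} ‖P_f^{[0,n]}(g) - P_f^{[0,n]}(h)‖₁`. -/
def supDiff {X : Type*} [MeasurableSpace X] (μ : Measure X)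
    (Q : Lp ℝ 1 μ → Lp ℝ 1 μ → Lp ℝ 1 μ) (n : ℕ) : ℝ :=
  ⨆ f : Density μ, ⨆ g : Density μ, ⨆ h : Density μ,
    ‖Pchain Q f n g - Pchain Q f n h‖

/-- `Q` is norm quasi-mixing. -/
def NormQuasiMixing {X : Type*} [MeasurableSpace X] (μ : Measure X)
    (Q : Lp ℝ 1 μ → Lp ℝ 1 μ → Lp ℝ 1 μ) : Prop :=
  Tendsto (fun n => supDiff μ Q n) atTop (𝓝 0)

/-- `Q` is norm mixing (uniformly asymptotically stable). -/
def NormMixing {X : Type*} [MeasurableSpace X] (μ : Measure X)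
    (Q : Lp ℝ 1 μ → Lp ℝ 1 μ → Lp ℝ 1 μ) : Prop :=
  ∃ f ∈ Density μ,
    Tendsto (fun n => ⨆ g : Density μ, ‖Qiter Q n g - f‖) atTop (𝓝 0)

end

/-- `PchainM Q f m k = P_f^{[m, m+k]}`: `P_f^{[m,m]} = id` and
`P_f^{[m,n+1]}(g) = Q(ℚⁿ(f), P_f^{[m,n]}(g))` for `n ≥ m`. -/
def PchainM {X : Type*} [MeasurableSpace X] {μ : Measure X}
    (Q : Lp ℝ 1 μ → Lp ℝ 1 μ → Lp ℝ 1 μ) (f : Lp ℝ 1 μ) (m : ℕ) :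
    ℕ → Lp ℝ 1 μ → Lp ℝ 1 μ
  | 0 => id
  | k + 1 => fun g => Q (Qiter Q (m + k) f) (PchainM Q f m k g)


section Aux

variable {X : Type*} [MeasurableSpace X] {μ : Measure X}
  {Q : Lp ℝ 1 μ → Lp ℝ 1 μ → Lp ℝ 1 μ}

lemma lp_smul_nonneg {c : ℝ} (hc : 0 ≤ c) {a : Lp ℝ 1 μ} (ha : 0 ≤ a) : 0 ≤ c • a := by
  rw [← Lp.coeFn_nonneg] at ha ⊢
  filter_upwards [Lp.coeFn_smul c a, ha] with x h1 h2
  simp only [Pi.zero_apply] at h2 ⊢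
  rw [h1]
  simpa using mul_nonneg hc h2

lemma lp_norm_add {a b : Lp ℝ 1 μ} (ha : 0 ≤ a) (hb : 0 ≤ b) : ‖a + b‖ = ‖a‖ + ‖b‖ := by
  have ha' := (Lp.coeFn_nonneg a).2 ha
  have hb' := (Lp.coeFn_nonneg b).2 hb
  rw [L1.norm_eq_integral_norm, L1.norm_eq_integral_norm, L1.norm_eq_integral_norm,
    ← integral_add (L1.integrable_coeFn a).norm (L1.integrable_coeFn b).norm]
  apply integral_congr_ae
  filter_upwards [Lp.coeFn_add a b, ha', hb'] with x hx hax hbx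
  simp only [Pi.zero_apply] at hax hbx
  rw [hx]
  simp only [Pi.add_apply, Real.norm_eq_abs, abs_of_nonneg hax, abs_of_nonneg hbx,
    abs_of_nonneg (add_nonneg hax hbx)]

lemma lp_decomp (u : Lp ℝ 1 μ) :
    ∃ a b : Lp ℝ 1 μ, 0 ≤ a ∧ 0 ≤ b ∧ u = a - b ∧ ‖u‖ = ‖a‖ + ‖b‖ :=
  ⟨u⁺, u⁻, posPart_nonneg u, negPart_nonneg u, (posPart_sub_negPart u).symm, by
    rw [← norm_abs_eq_norm u, ← posPart_add_negPart u,
      lp_norm_add (posPart_nonneg u) (negPart_nonneg u)]⟩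

lemma real_helper {A B : ℝ} (main : ∀ θ : ℝ, 0 < θ → θ ≤ 1 → A ≤ B + 2 * θ) : A ≤ B := by
  by_contra hcon
  push_neg at hcon
  rcases le_or_gt ((A - B)/4) 1 with hc | hc
  · have hm := main ((A - B)/4) (by linarith) hc
    linarith
  · have hm := main 1 one_pos le_rfl
    linarith

lemma bddAbove_of_le {ι : Sort*} {F : ι → ℝ} {c : ℝ} (h : ∀ i, F i ≤ c) :
    BddAbove (Set.range F) :=
  ⟨c, by rintro x ⟨i, rfl⟩; exact h i⟩

namespace IsQSO

variable (hQ : IsQSO μ Q)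
include hQ

lemma sub_left (a b c : Lp ℝ 1 μ) : Q (a - b) c = Q a c - Q b c := by
  have h := hQ.add_left (a - b) b c
  rw [sub_add_cancel] at h
  rw [h]; abel

lemma sub_right (a b c : Lp ℝ 1 μ) : Q a (b - c) = Q a b - Q a c := by
  have h := hQ.add_right a (b - c) c
  rw [sub_add_cancel] at h
  rw [h]; abel

lemma norm_le (u v : Lp ℝ 1 μ) : ‖Q u v‖ ≤ ‖u‖ * ‖v‖ := by
  obtain ⟨a, b, ha, hb, hu, hnu⟩ := lp_decomp u
  obtain ⟨c, d, hc, hd, hv, hnv⟩ := lp_decomp v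
  rw [hnu, hnv, hu, hv, hQ.sub_left, hQ.sub_right, hQ.sub_right]
  calc ‖Q a c - Q a d - (Q b c - Q b d)‖
      ≤ ‖Q a c - Q a d‖ + ‖Q b c - Q b d‖ := norm_sub_le _ _
    _ ≤ (‖Q a c‖ + ‖Q a d‖) + (‖Q b c‖ + ‖Q b d‖) :=
        add_le_add (norm_sub_le _ _) (norm_sub_le _ _)
    _ = (‖a‖ + ‖b‖) * (‖c‖ + ‖d‖) := by
        rw [hQ.norm_mul a c ha hc, hQ.norm_mul a d ha hd, hQ.norm_mul b c hb hc,
          hQ.norm_mul b d hb hd]; ring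

lemma mem_density {g h : Lp ℝ 1 μ} (hg : g ∈ Density μ) (hh : h ∈ Density μ) :
    Q g h ∈ Density μ :=
  ⟨hQ.nonneg g h hg.1 hh.1, by rw [hQ.norm_mul g h hg.1 hh.1, hg.2, hh.2, one_mul]⟩

lemma qiter_mem {g : Lp ℝ 1 μ} (hg : g ∈ Density μ) (n : ℕ) : Qiter Q n g ∈ Density μ := by
  induction n with
  | zero => exact hg
  | succ n ih =>
    rw [Qiter, Function.iterate_succ_apply']
    exact hQ.mem_density ih ih

lemma pchainM_mem {g h : Lp ℝ 1 μ} (hg : g ∈ Density μ) (hh : h ∈ Density μ)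
    (m k : ℕ) : PchainM Q h m k g ∈ Density μ := by
  induction k with
  | zero => exact hg
  | succ k ih => exact hQ.mem_density (hQ.qiter_mem hh (m + k)) ih

/-- Lipschitz estimate for `ℚ` on densities. -/
lemma lip {a b : Lp ℝ 1 μ} (hna : ‖a‖ = 1) (hnb : ‖b‖ = 1) :
    ‖QQ Q a - QQ Q b‖ ≤ 2 * ‖a - b‖ := by
  have key : QQ Q a - QQ Q b = Q (a - b) a + Q b (a - b) := by
    rw [hQ.sub_left, hQ.sub_right, QQ, QQ]; abel
  rw [key]
  calc ‖Q (a - b) a + Q b (a - b)‖ ≤ ‖Q (a - b) a‖ + ‖Q b (a - b)‖ := norm_add_le _ _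
    _ ≤ ‖a - b‖ * ‖a‖ + ‖b‖ * ‖a - b‖ := add_le_add (hQ.norm_le _ _) (hQ.norm_le _ _)
    _ = 2 * ‖a - b‖ := by rw [hna, hnb]; ring

end IsQSO

lemma pchain_eq_pchainM (h : Lp ℝ 1 μ) : ∀ (n : ℕ) (g : Lp ℝ 1 μ),
    Pchain Q h n g = PchainM Q h 0 n g
  | 0, g => rfl
  | n+1, g => by
    show Q (Qiter Q n h) (Pchain Q h n g) = Q (Qiter Q (0 + n) h) (PchainM Q h 0 n g)
    rw [zero_add, pchain_eq_pchainM h n g]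

lemma pchain_self (h : Lp ℝ 1 μ) : ∀ n : ℕ, Pchain Q h n h = Qiter Q n h
  | 0 => rfl
  | n+1 => by
    show Q (Qiter Q n h) (Pchain Q h n h) = Qiter Q (n+1) h
    have h1 : Qiter Q (n+1) h = QQ Q (Qiter Q n h) := Function.iterate_succ_apply' _ _ _
    rw [pchain_self h n, h1]
    rfl

/-- the sequence `E n = sup_{g ∈ 𝒟} ‖ℚⁿ g - f‖`. -/
noncomputable def EE (Q : Lp ℝ 1 μ → Lp ℝ 1 μ → Lp ℝ 1 μ) (f : Lp ℝ 1 μ) (n : ℕ) : ℝ :=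
  ⨆ g : Density μ, ‖Qiter Q n g - f‖

section WithDensity

lemma diff_norm_le_two {a b : Lp ℝ 1 μ} (ha : a ∈ Density μ) (hb : b ∈ Density μ) :
    ‖a - b‖ ≤ 2 := by
  calc ‖a - b‖ ≤ ‖a‖ + ‖b‖ := norm_sub_le _ _
    _ ≤ 2 := by rw [ha.2, hb.2]; norm_num

variable (hQ : IsQSO μ Q) {f : Lp ℝ 1 μ} (hf : f ∈ Density μ)
include hQ hf

lemma le_EE {g : Lp ℝ 1 μ} (hg : g ∈ Density μ) (n : ℕ) :
    ‖Qiter Q n g - f‖ ≤ EE Q f n := by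
  haveI : Nonempty (Density μ) := ⟨⟨f, hf⟩⟩
  exact le_ciSup (bddAbove_of_le fun i : Density μ =>
    diff_norm_le_two (hQ.qiter_mem i.2 n) hf) (⟨g, hg⟩ : Density μ)

lemma EE_le_two (n : ℕ) : EE Q f n ≤ 2 := by
  haveI : Nonempty (Density μ) := ⟨⟨f, hf⟩⟩
  exact ciSup_le fun i => diff_norm_le_two (hQ.qiter_mem i.2 n) hf

lemma EE_nonneg (n : ℕ) : 0 ≤ EE Q f n :=
  le_trans (norm_nonneg _) (le_EE hQ hf hf n)

lemma EE_antitone : Antitone (EE Q f) := by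
  refine antitone_nat_of_succ_le fun n => ?_
  haveI : Nonempty (Density μ) := ⟨⟨f, hf⟩⟩
  refine ciSup_le fun i => ?_
  have h1 : Qiter Q (n + 1) i = Qiter Q n (QQ Q i) := Function.iterate_succ_apply _ _ _
  rw [h1]
  exact le_EE hQ hf (hQ.mem_density i.2 i.2) n

omit hf in
lemma S_iter_sub (a b : Lp ℝ 1 μ) (n : ℕ) :
    (Q f)^[n] (a - b) = (Q f)^[n] a - (Q f)^[n] b := by
  induction n with
  | zero => rfl
  | succ n ih =>
    rw [Function.iterate_succ_apply', Function.iterate_succ_apply',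
      Function.iterate_succ_apply', ih, hQ.sub_right]

variable (hE : Tendsto (EE Q f) atTop (𝓝 0))
include hE

lemma Qfixed : QQ Q f = f := by
  have key : ∀ n : ℕ, ‖QQ Q f - f‖ ≤ 3 * EE Q f n := by
    intro n
    have h1 : ‖QQ Q f - QQ Q (Qiter Q n f)‖ ≤ 2 * ‖Qiter Q n f - f‖ := by
      have := hQ.lip (a := Qiter Q n f) (b := f) (hQ.qiter_mem hf n).2 hf.2
      rw [← norm_neg]
      simpa [neg_sub] using this
    have h2 : ‖Qiter Q (n+1) f - f‖ ≤ EE Q f (n+1) := le_EE hQ hf hf (n+1)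
    have h3 : QQ Q (Qiter Q n f) = Qiter Q (n+1) f :=
      (Function.iterate_succ_apply' _ _ _).symm
    have h4 : ‖Qiter Q n f - f‖ ≤ EE Q f n := le_EE hQ hf hf n
    have h5 : EE Q f (n+1) ≤ EE Q f n := EE_antitone hQ hf (Nat.le_succ n)
    calc ‖QQ Q f - f‖ ≤ ‖QQ Q f - QQ Q (Qiter Q n f)‖ + ‖QQ Q (Qiter Q n f) - f‖ :=
          norm_sub_le_norm_sub_add_norm_sub _ _ _
      _ ≤ 2 * EE Q f n + EE Q f (n+1) := by
          rw [h3]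
          have h6 : ‖QQ Q f - Qiter Q (n+1) f‖ ≤ 2 * EE Q f n := by
            rw [← h3]; exact h1.trans (by linarith)
          exact add_le_add h6 h2
      _ ≤ 3 * EE Q f n := by linarith
  have hlim : Tendsto (fun n => 3 * EE Q f n) atTop (𝓝 0) := by
    simpa using hE.const_mul 3
  have : ‖QQ Q f - f‖ ≤ 0 := ge_of_tendsto' hlim key
  rw [← sub_eq_zero]
  exact norm_le_zero_iff.1 this

lemma Sfixed (n : ℕ) : (Q f)^[n] f = f := by
  induction n with
  | zero => rfl
  | succ n ih =>
    rw [Function.iterate_succ_apply', ih]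
    exact Qfixed hQ hf hE

set_option maxHeartbeats 2000000 in
/-- Key Taylor estimate: uniform mixing of `ℚ` controls the homogeneous chain `S = Q(f,·)`. -/
lemma skey {J n : ℕ} (hJ : 2 ≤ J) (hJn : J ≤ n) {g : Lp ℝ 1 μ} (hg : g ∈ Density μ) :
    ‖(Q f)^[n] g - f‖ ≤ (2:ℝ)^J / 2^n + 3 * EE Q f J := by
  have hfix : QQ Q f = f := Qfixed hQ hf hE
  have heJ : 0 ≤ EE Q f J := EE_nonneg hQ hf J
  have main : ∀ θ : ℝ, 0 < θ → θ ≤ 1 →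
      ‖(Q f)^[n] g - f‖ ≤ (2:ℝ)^J / 2^n + 3 * EE Q f J + 2 * θ := by
    intro θ hθ hθ1
    set e := EE Q f J with he
    set s : ℝ := (e + θ) / 2^J with hs
    have hP : (0:ℝ) < 2^J := by positivity
    have hspos : 0 < s := by
      apply div_pos (by linarith) hP
    have hs1 : s ≤ 1 := by
      rw [hs, div_le_one hP]
      have h4 : (4:ℝ) ≤ 2^J := by
        calc (4:ℝ) = 2^2 := by norm_num
          _ ≤ 2^J := by exact pow_le_pow_right₀ (by norm_num) hJ
      have h2 := EE_le_two hQ hf J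
      rw [← he] at h2
      linarith
    set u := g - f with hu
    have hun : ‖u‖ ≤ 2 := diff_norm_le_two hg hf
    set x := f + s • u with hx
    have hxeq : x = (1-s) • f + s • g := by rw [hx, hu]; module
    have hxmem : x ∈ Density μ := by
      constructor
      · rw [hxeq]
        exact add_nonneg (lp_smul_nonneg (by linarith) hf.1) (lp_smul_nonneg hspos.le hg.1)
      · rw [hxeq, lp_norm_add (lp_smul_nonneg (by linarith) hf.1) (lp_smul_nonneg hspos.le hg.1),
          norm_smul, norm_smul, hf.2, hg.2, Real.norm_eq_abs, Real.norm_eq_abs,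
          abs_of_nonneg (by linarith : (0:ℝ) ≤ 1 - s), abs_of_nonneg hspos.le]
        ring
    have hsucc : ∀ (y : Lp ℝ 1 μ) (k : ℕ), Qiter Q (k+1) y = QQ Q (Qiter Q k y) :=
      fun y k => Function.iterate_succ_apply' _ _ _
    set w : ℕ → Lp ℝ 1 μ := fun k => Qiter Q k x - f with hwdef
    set r : ℕ → Lp ℝ 1 μ := fun k => w k - ((2^k * s) • (Q f)^[k] u) with hrdef
    have hw0 : w 0 = s • u := by
      show x - f = s • u
      rw [hx]; abel
    have hxw : ∀ k, Qiter Q k x = f + w k := by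
      intro k; show Qiter Q k x = f + (Qiter Q k x - f); abel
    have hwstep : ∀ k, w (k+1) = Q f (w k) + Q f (w k) + Q (w k) (w k) := by
      intro k
      have h1 : w (k+1) = Q (f + w k) (f + w k) - f := by
        show Qiter Q (k+1) x - f = _
        rw [hsucc x k, hxw k]
        rfl
      rw [h1, hQ.add_left, hQ.add_right, hQ.add_right]
      have hff : Q f f = f := hfix
      rw [hff, hQ.symm (w k) f]
      abel
    have hwE : ∀ k, ‖w k‖ ≤ EE Q f k := fun k => le_EE hQ hf hxmem k
    have hwlip : ∀ k, ‖w k‖ ≤ 2^(k+1) * s := by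
      intro k; induction k with
      | zero =>
        rw [hw0, norm_smul, Real.norm_eq_abs, abs_of_nonneg hspos.le, pow_one]
        calc s * ‖u‖ ≤ s * 2 := by
              exact mul_le_mul_of_nonneg_left hun hspos.le
          _ = 2 * s := by ring
      | succ k ih =>
        have h1 : w (k+1) = QQ Q (Qiter Q k x) - QQ Q f := by
          rw [hfix]
          exact congrArg (fun z => z - f) (hsucc x k)
        calc ‖w (k+1)‖ = ‖QQ Q (Qiter Q k x) - QQ Q f‖ := by rw [h1]
          _ ≤ 2 * ‖Qiter Q k x - f‖ := hQ.lip (hQ.qiter_mem hxmem k).2 hf.2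
          _ = 2 * ‖w k‖ := rfl
          _ ≤ 2 * (2^(k+1) * s) := by linarith
          _ = 2^(k+1+1) * s := by ring
    have hr0 : r 0 = 0 := by
      show w 0 - ((2^0 * s) • (Q f)^[0] u) = 0
      rw [hw0]
      norm_num
    have hrstep : ∀ k, r (k+1) = Q f (r k) + Q f (r k) + Q (w k) (w k) := by
      intro k
      have hQfr : Q f (r k) = Q f (w k) - ((2^k * s) • (Q f)^[k+1] u) := by
        show Q f (w k - ((2^k * s) • (Q f)^[k] u)) = _
        rw [hQ.sub_right, hQ.smul_right, Function.iterate_succ_apply']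
      show w (k+1) - ((2^(k+1) * s) • (Q f)^[k+1] u) = _
      rw [hwstep k, hQfr]
      have hps : (2:ℝ)^(k+1) * s = 2^k * s + 2^k * s := by ring
      rw [hps, add_smul]
      abel
    have hrbound : ∀ k, ‖r (k+1)‖ ≤ 2 * ‖r k‖ + ‖w k‖ * ‖w k‖ := by
      intro k
      rw [hrstep k]
      have h1 : ‖Q f (r k)‖ ≤ ‖r k‖ := by
        have h := hQ.norm_le f (r k)
        rw [hf.2, one_mul] at h
        exact h
      have h2 := hQ.norm_le (w k) (w k)
      calc ‖Q f (r k) + Q f (r k) + Q (w k) (w k)‖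
          ≤ ‖Q f (r k) + Q f (r k)‖ + ‖Q (w k) (w k)‖ := norm_add_le _ _
        _ ≤ (‖Q f (r k)‖ + ‖Q f (r k)‖) + ‖Q (w k) (w k)‖ := by
            exact add_le_add (norm_add_le _ _) le_rfl
        _ ≤ 2 * ‖r k‖ + ‖w k‖ * ‖w k‖ := by linarith
    have hr1 : ∀ k, ‖r k‖ ≤ 2^(2*k+1) * s^2 := by
      intro k; induction k with
      | zero =>
        rw [hr0, norm_zero]
        positivity
      | succ k ih =>
        have hw2 := hwlip k
        have hww : ‖w k‖ * ‖w k‖ ≤ (2^(k+1) * s) * (2^(k+1) * s) :=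
          mul_le_mul hw2 hw2 (norm_nonneg _) (by positivity)
        calc ‖r (k+1)‖ ≤ 2 * ‖r k‖ + ‖w k‖ * ‖w k‖ := hrbound k
          _ ≤ 2 * (2^(2*k+1) * s^2) + (2^(k+1) * s) * (2^(k+1) * s) := by linarith
          _ = 2^(2*(k+1)+1) * s^2 := by ring
    have hr2 : ∀ k, ‖r (J+k)‖ ≤ 2^(J+k+1+J) * s^2 + ((2:ℝ)^k - 1) * e^2 := by
      intro k; induction k with
      | zero =>
        have h1 := hr1 J
        have h2 : J + 0 + 1 + J = 2*J+1 := by omega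
        rw [h2]
        simpa using h1
      | succ k ih =>
        have hwJk : ‖w (J+k)‖ ≤ e := (hwE (J+k)).trans (EE_antitone hQ hf (Nat.le_add_right J k))
        have hww : ‖w (J+k)‖ * ‖w (J+k)‖ ≤ e * e :=
          mul_le_mul hwJk hwJk (norm_nonneg _) heJ
        calc ‖r (J+(k+1))‖ ≤ 2 * ‖r (J+k)‖ + ‖w (J+k)‖ * ‖w (J+k)‖ := hrbound (J+k)
          _ ≤ 2 * (2^(J+k+1+J) * s^2 + ((2:ℝ)^k - 1) * e^2) + e * e := by linarith
          _ = 2^(J+(k+1)+1+J) * s^2 + ((2:ℝ)^(k+1) - 1) * e^2 := by ring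
    -- assemble
    obtain ⟨k, rfl⟩ : ∃ k, n = J + k := ⟨n - J, by omega⟩
    have hSn : (Q f)^[J+k] g - f = (Q f)^[J+k] u := by
      rw [hu, S_iter_sub hQ g f (J+k), Sfixed hQ hf hE (J+k)]
    have hwr : (((2:ℝ)^(J+k) * s) • ((Q f)^[J+k] u)) = w (J+k) - r (J+k) := by
      show _ = w (J+k) - (w (J+k) - ((2^(J+k) * s) • (Q f)^[J+k] u))
      abel
    have hnorm1 : ((2:ℝ)^(J+k) * s) * ‖(Q f)^[J+k] u‖ ≤ e + (2^(J+k+1+J) * s^2 + (2:ℝ)^k * e^2) := by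
      have h1 : ‖(((2:ℝ)^(J+k) * s) • ((Q f)^[J+k] u))‖ ≤ ‖w (J+k)‖ + ‖r (J+k)‖ := by
        rw [hwr]; exact norm_sub_le _ _
      rw [norm_smul, Real.norm_eq_abs, abs_of_nonneg (by positivity : (0:ℝ) ≤ 2^(J+k) * s)] at h1
      have h2 : ‖w (J+k)‖ ≤ e := (hwE (J+k)).trans (EE_antitone hQ hf (Nat.le_add_right J k))
      have h3 := hr2 k
      have h4 : ((2:ℝ)^k - 1) * e^2 ≤ (2:ℝ)^k * e^2 := by nlinarith [sq_nonneg e]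
      linarith
    set P := (2:ℝ)^J with hPdef
    set K := (2:ℝ)^k with hKdef
    have hKpos : (0:ℝ) < K := by positivity
    have hPK : (2:ℝ)^(J+k) = P * K := by rw [pow_add]
    have hPPK : (2:ℝ)^(J+k+1+J) = P * K * 2 * P := by
      rw [pow_add, pow_add, pow_add]; ring
    have hPs : P * s = e + θ := by
      rw [hs]; field_simp
    rw [hSn]
    rw [hPK] at hnorm1 ⊢
    rw [hPPK] at hnorm1
    set Xv := ‖(Q f)^[J+k] u‖ with hXv
    have hXv0 : 0 ≤ Xv := norm_nonneg _
    have hPKs : (0:ℝ) < P * K * s := by positivity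
    have hgoal2 : P * K * s * Xv ≤ P * K * s * (P / (P * K) + 3 * e + 2 * θ) := by
      have e1 : e ≤ P * s := by linarith
      have e2 : 2 * P * P * K * s^2 = 2 * (P * K * s) * (e + θ) := by
        rw [← hPs]; ring
      have e3 : K * e^2 ≤ (P * K * s) * e := by nlinarith [mul_nonneg hKpos.le heJ]
      have e4 : P * K * s * (P / (P * K) + 3 * e + 2 * θ)
          = P * s + 3 * (P * K * s) * e + 2 * (P * K * s) * θ := by
        field_simp
      rw [e4]
      nlinarith
    have := (mul_le_mul_iff_right₀ hPKs).1 hgoal2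
    linarith
  exact real_helper main

/-- Uniform mixing of the homogeneous chain `S = Q(f,·)`. -/
lemma sD : ∀ ε : ℝ, 0 < ε → ∃ k : ℕ, ∀ g ∈ Density μ, ‖(Q f)^[k] g - f‖ ≤ ε := by
  intro ε hε
  have h1 : ∀ᶠ J in atTop, EE Q f J < ε/6 :=
    hE.eventually (gt_mem_nhds (by linarith : (0:ℝ) < ε/6))
  obtain ⟨J, hJe, hJ2⟩ := (h1.and (eventually_ge_atTop 2)).exists
  have h2 : Tendsto (fun n : ℕ => (2:ℝ)^J / 2^n) atTop (𝓝 0) :=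
    tendsto_const_nhds.div_atTop (tendsto_pow_atTop_atTop_of_one_lt one_lt_two)
  have h3 : ∀ᶠ n in atTop, (2:ℝ)^J / 2^n < ε/2 :=
    h2.eventually (gt_mem_nhds (by linarith : (0:ℝ) < ε/2))
  obtain ⟨n, hn2, hnJ⟩ := (h3.and (eventually_ge_atTop J)).exists
  refine ⟨n, fun g hg => ?_⟩
  have := skey hQ hf hE hJ2 hnJ hg
  have h4 : 3 * EE Q f J ≤ ε/2 := by linarith
  linarith

omit hE in
lemma chainC {g h : Lp ℝ 1 μ} (hg : g ∈ Density μ) (hh : h ∈ Density μ) (m j : ℕ) :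
    ∀ k : ℕ, ‖PchainM Q h m (j+k) g - (Q f)^[k] (PchainM Q h m j g)‖
      ≤ (k : ℝ) * EE Q f (m+j) := by
  intro k; induction k with
  | zero => simp
  | succ k ih =>
    have hd : PchainM Q h m (j+k) g ∈ Density μ := hQ.pchainM_mem hg hh m (j+k)
    have step : PchainM Q h m (j+(k+1)) g
        = Q (Qiter Q (m+(j+k)) h) (PchainM Q h m (j+k) g) := rfl
    have hSk : (Q f)^[k+1] (PchainM Q h m j g) = Q f ((Q f)^[k] (PchainM Q h m j g)) :=
      Function.iterate_succ_apply' _ _ _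
    have hdecomp : Q (Qiter Q (m+(j+k)) h) (PchainM Q h m (j+k) g)
          - Q f ((Q f)^[k] (PchainM Q h m j g))
        = Q (Qiter Q (m+(j+k)) h - f) (PchainM Q h m (j+k) g)
          + Q f (PchainM Q h m (j+k) g - (Q f)^[k] (PchainM Q h m j g)) := by
      rw [hQ.sub_left, hQ.sub_right]; abel
    have h1 : ‖Q (Qiter Q (m+(j+k)) h - f) (PchainM Q h m (j+k) g)‖
        ≤ ‖Qiter Q (m+(j+k)) h - f‖ := by
      have h' := hQ.norm_le (Qiter Q (m+(j+k)) h - f) (PchainM Q h m (j+k) g)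
      rw [hd.2, mul_one] at h'
      exact h'
    have h2 : ‖Q f (PchainM Q h m (j+k) g - (Q f)^[k] (PchainM Q h m j g))‖
        ≤ ‖PchainM Q h m (j+k) g - (Q f)^[k] (PchainM Q h m j g)‖ := by
      have h' := hQ.norm_le f (PchainM Q h m (j+k) g - (Q f)^[k] (PchainM Q h m j g))
      rw [hf.2, one_mul] at h'
      exact h'
    have h3 : ‖Qiter Q (m+(j+k)) h - f‖ ≤ EE Q f (m+j) :=
      (le_EE hQ hf hh (m+(j+k))).trans (EE_antitone hQ hf (by omega))
    calc ‖PchainM Q h m (j+(k+1)) g - (Q f)^[k+1] (PchainM Q h m j g)‖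
        = ‖Q (Qiter Q (m+(j+k)) h) (PchainM Q h m (j+k) g)
            - Q f ((Q f)^[k] (PchainM Q h m j g))‖ := by rw [step, hSk]
      _ = ‖Q (Qiter Q (m+(j+k)) h - f) (PchainM Q h m (j+k) g)
            + Q f (PchainM Q h m (j+k) g - (Q f)^[k] (PchainM Q h m j g))‖ := by
          rw [hdecomp]
      _ ≤ ‖Qiter Q (m+(j+k)) h - f‖
            + ‖PchainM Q h m (j+k) g - (Q f)^[k] (PchainM Q h m j g)‖ :=
          le_trans (norm_add_le _ _) (add_le_add h1 h2)
      _ ≤ EE Q f (m+j) + (k : ℝ) * EE Q f (m+j) := add_le_add h3 ih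
      _ = ((k+1 : ℕ) : ℝ) * EE Q f (m+j) := by push_cast; ring

lemma master : ∀ ε : ℝ, 0 < ε → ∃ N : ℕ, ∀ m K, N ≤ K →
    ∀ g ∈ Density μ, ∀ h ∈ Density μ, ‖PchainM Q h m K g - f‖ ≤ ε := by
  intro ε hε
  obtain ⟨k, hk⟩ := sD hQ hf hE (ε/2) (by linarith)
  have hpos : (0:ℝ) < ε/(2*(k:ℝ)+2) := by positivity
  have h1 : ∀ᶠ M in atTop, EE Q f M < ε/(2*(k:ℝ)+2) :=
    hE.eventually (gt_mem_nhds hpos)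
  obtain ⟨M, hM⟩ := h1.exists
  refine ⟨M + k, fun m K hK g hg h hh => ?_⟩
  set j := K - k with hj
  have hjk : j + k = K := by omega
  have hd : PchainM Q h m j g ∈ Density μ := hQ.pchainM_mem hg hh m j
  have h1' := chainC hQ hf hg hh m j k
  have h2 := hk _ hd
  have h3 : EE Q f (m+j) ≤ EE Q f M := EE_antitone hQ hf (by omega)
  have h4 : (k:ℝ) * EE Q f (m+j) ≤ ε/2 := by
    have hk0 : (0:ℝ) ≤ (k:ℝ) := Nat.cast_nonneg k
    have h5 : (k:ℝ) * EE Q f (m+j) ≤ (k:ℝ) * (ε/(2*(k:ℝ)+2)) :=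
      mul_le_mul_of_nonneg_left (h3.trans hM.le) hk0
    have h6 : (k:ℝ) * (ε/(2*(k:ℝ)+2)) ≤ ε/2 := by
      rw [mul_div_assoc', div_le_div_iff₀ (by positivity) (by norm_num)]
      nlinarith
    linarith
  calc ‖PchainM Q h m K g - f‖ = ‖PchainM Q h m (j+k) g - f‖ := by rw [hjk]
    _ ≤ ‖PchainM Q h m (j+k) g - (Q f)^[k] (PchainM Q h m j g)‖
        + ‖(Q f)^[k] (PchainM Q h m j g) - f‖ := norm_sub_le_norm_sub_add_norm_sub _ _ _
    _ ≤ (k:ℝ) * EE Q f (m+j) + ε/2 := add_le_add h1' h2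
    _ ≤ ε := by linarith

lemma tendstoPM (m : ℕ) :
    Tendsto (fun k => ⨆ g : Density μ, ⨆ h : Density μ, ‖PchainM Q (↑h) m k (↑g) - f‖)
      atTop (𝓝 0) := by
  haveI : Nonempty (Density μ) := ⟨⟨f, hf⟩⟩
  rw [Metric.tendsto_atTop]
  intro ε hε
  obtain ⟨N, hN⟩ := master hQ hf hE (ε/2) (by linarith)
  refine ⟨N, fun K hK => ?_⟩
  have hge : 0 ≤ ⨆ g : Density μ, ⨆ h : Density μ, ‖PchainM Q (↑h) m K (↑g) - f‖ :=
    Real.iSup_nonneg fun g => Real.iSup_nonneg fun h => norm_nonneg _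
  rw [Real.dist_eq, sub_zero, abs_of_nonneg hge]
  have hle : (⨆ g : Density μ, ⨆ h : Density μ, ‖PchainM Q (↑h) m K (↑g) - f‖) ≤ ε/2 :=
    ciSup_le fun g => ciSup_le fun h => hN m K hK _ g.2 _ h.2
  linarith

end WithDensity

end Aux

/-- For a quadratic stochastic operator `Q` the following are equivalent:
(1) there is `f ∈ 𝒟` with `sup_{g∈𝒟} ‖ℚⁿ(g) − f‖₁ → 0`;
(2) there is `f ∈ 𝒟` with `sup_{g,h∈𝒟} ‖P_h^{[0,n]}(g) − f‖₁ → 0`;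
(3) there is `f ∈ 𝒟` such that for every `m ≥ 0`,
`sup_{g,h∈𝒟} ‖P_h^{[m,n]}(g) − f‖₁ → 0` as `n → ∞` (here `n = m + k`, `k → ∞`). -/
theorem normMixing_tfae {X : Type*} [MeasurableSpace X]
    (μ : Measure X) [SigmaFinite μ]
    (Q : Lp ℝ 1 μ → Lp ℝ 1 μ → Lp ℝ 1 μ) (hQ : IsQSO μ Q) :
    ((∃ f ∈ Density μ,
        Tendsto (fun n => ⨆ g : Density μ, ‖Qiter Q n g - f‖) atTop (𝓝 0)) ↔
      (∃ f ∈ Density μ,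
        Tendsto (fun n => ⨆ g : Density μ, ⨆ h : Density μ,
          ‖Pchain Q h n g - f‖) atTop (𝓝 0))) ∧
    ((∃ f ∈ Density μ,
        Tendsto (fun n => ⨆ g : Density μ, ⨆ h : Density μ,
          ‖Pchain Q h n g - f‖) atTop (𝓝 0)) ↔
      (∃ f ∈ Density μ, ∀ m : ℕ,
        Tendsto (fun k => ⨆ g : Density μ, ⨆ h : Density μ,
          ‖PchainM Q h m k g - f‖) atTop (𝓝 0))) := by
  have t21 : (∃ f ∈ Density μ,
      Tendsto (fun n => ⨆ g : Density μ, ⨆ h : Density μ,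
        ‖Pchain Q h n g - f‖) atTop (𝓝 0)) →
      (∃ f ∈ Density μ,
        Tendsto (fun n => ⨆ g : Density μ, ‖Qiter Q n g - f‖) atTop (𝓝 0)) := by
    rintro ⟨f, hf, hF⟩
    refine ⟨f, hf, ?_⟩
    haveI : Nonempty (Density μ) := ⟨⟨f, hf⟩⟩
    have hbdd : ∀ (n : ℕ) (g h : Density μ), ‖Pchain Q (↑h) n (↑g) - f‖ ≤ 2 := by
      intro n g h
      have hmem : Pchain Q (↑h) n (↑g) ∈ Density μ := by
        rw [pchain_eq_pchainM]
        exact hQ.pchainM_mem g.2 h.2 0 n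
      exact diff_norm_le_two hmem hf
    have hEF : ∀ n, (⨆ g : Density μ, ‖Qiter Q n (↑g) - f‖)
        ≤ (⨆ g : Density μ, ⨆ h : Density μ, ‖Pchain Q (↑h) n (↑g) - f‖) := by
      intro n
      refine ciSup_le fun g => ?_
      have h1 : ‖Qiter Q n (↑g) - f‖ = ‖Pchain Q (↑g) n (↑g) - f‖ := by rw [pchain_self]
      rw [h1]
      calc ‖Pchain Q (↑g) n (↑g) - f‖
          ≤ ⨆ h : Density μ, ‖Pchain Q (↑h) n (↑g) - f‖ :=
            le_ciSup (bddAbove_of_le fun h => hbdd n g h) g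
        _ ≤ ⨆ g : Density μ, ⨆ h : Density μ, ‖Pchain Q (↑h) n (↑g) - f‖ :=
            le_ciSup (bddAbove_of_le fun g' => ciSup_le fun h => hbdd n g' h) g
    exact squeeze_zero (fun n => Real.iSup_nonneg fun g => norm_nonneg _) hEF hF
  have t13 : (∃ f ∈ Density μ,
      Tendsto (fun n => ⨆ g : Density μ, ‖Qiter Q n g - f‖) atTop (𝓝 0)) →
      (∃ f ∈ Density μ, ∀ m : ℕ,
        Tendsto (fun k => ⨆ g : Density μ, ⨆ h : Density μ,
          ‖PchainM Q h m k g - f‖) atTop (𝓝 0)) := by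
    rintro ⟨f, hf, hE⟩
    exact ⟨f, hf, fun m => tendstoPM hQ hf hE m⟩
  have t32 : (∃ f ∈ Density μ, ∀ m : ℕ,
      Tendsto (fun k => ⨆ g : Density μ, ⨆ h : Density μ,
        ‖PchainM Q h m k g - f‖) atTop (𝓝 0)) →
      (∃ f ∈ Density μ,
        Tendsto (fun n => ⨆ g : Density μ, ⨆ h : Density μ,
          ‖Pchain Q h n g - f‖) atTop (𝓝 0)) := by
    rintro ⟨f, hf, hG⟩
    refine ⟨f, hf, ?_⟩
    have h0 := hG 0
    have heq : (fun n => ⨆ g : Density μ, ⨆ h : Density μ, ‖Pchain Q (↑h) n (↑g) - f‖)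
        = (fun n => ⨆ g : Density μ, ⨆ h : Density μ, ‖PchainM Q (↑h) 0 n (↑g) - f‖) := by
      funext n
      exact iSup_congr fun g => iSup_congr fun h => by rw [pchain_eq_pchainM]
    rw [heq]
    exact h0
  exact ⟨⟨fun h => t32 (t13 h), t21⟩, ⟨fun h => t13 (t21 h), t32⟩⟩
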